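/- The constant K₀ := (K/2) ∫₀^π (sin λ)/λ dλ satisfies K₀ < 1.25, where K = (1 + 3^{-2} + 5^{-2} + ⋯)/(1 − 3^{-2} + 5^{-2} − ⋯) ≈ 1.347 is the best constant in Kolmogorov's weak (1,1) inequality for the conjugate function. -/

import Mathlib

set_option maxHeartbeats 1000000


open MeasureTheory

section Aux

open Real Finset

/-- If `f 0 = 0` and `f' ≥ 0` on `[0, ∞)`, then `f ≥ 0` on `[0, ∞)`. -/
lemma aux_nonneg_of_deriv {f f' : ℝ → ℝ} (h0 : f 0 = 0)
    (hf : ∀ x, HasDerivAt f (f' x) x) (hd : ∀ x, 0 ≤ x → 0 ≤ f' x) :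
    ∀ x, 0 ≤ x → 0 ≤ f x := by
  intro x hx
  have hm : MonotoneOn f (Set.Ici 0) := by
    apply monotoneOn_of_deriv_nonneg (convex_Ici 0)
      (fun y _ => (hf y).continuousAt.continuousWithinAt)
      (fun y _ => (hf y).differentiableAt.differentiableWithinAt)
    intro y hy
    rw [(hf y).deriv]
    refine hd y ?_
    rw [interior_Ici] at hy
    exact le_of_lt hy
  have h := hm Set.self_mem_Ici hx hx
  rw [h0] at h
  exact h

lemma aux_s3 : ∀ x : ℝ, 0 ≤ x → 0 ≤ Real.sin x - x + x ^ 3 / 6 := by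
  apply aux_nonneg_of_deriv (f' := fun x => Real.cos x - 1 + x ^ 2 / 2) (by norm_num)
  · intro x
    have H := ((Real.hasDerivAt_sin x).sub (hasDerivAt_id x)).add
      ((hasDerivAt_pow 3 x).div_const 6)
    convert H using 1
    · rfl
    · rfl
    · rfl
    push_cast; ring
  · intro x hx
    have := Real.one_sub_sq_div_two_le_cos (x := x)
    linarith

lemma aux_c4 : ∀ x : ℝ, 0 ≤ x → 0 ≤ 1 - x ^ 2 / 2 + x ^ 4 / 24 - Real.cos x := by
  apply aux_nonneg_of_deriv (f' := fun x => -x + x ^ 3 / 6 + Real.sin x) (by norm_num)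
  · intro x
    have H := (((hasDerivAt_const x (1 : ℝ)).sub ((hasDerivAt_pow 2 x).div_const 2)).add
      ((hasDerivAt_pow 4 x).div_const 24)).sub (Real.hasDerivAt_cos x)
    convert H using 1
    · rfl
    · rfl
    · rfl
    push_cast; ring
  · intro x hx
    have := aux_s3 x hx
    linarith

lemma aux_s5 : ∀ x : ℝ, 0 ≤ x → 0 ≤ x - x ^ 3 / 6 + x ^ 5 / 120 - Real.sin x := by
  apply aux_nonneg_of_deriv (f' := fun x => 1 - x ^ 2 / 2 + x ^ 4 / 24 - Real.cos x) (by norm_num)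
  · intro x
    have H := (((hasDerivAt_id x).sub ((hasDerivAt_pow 3 x).div_const 6)).add
      ((hasDerivAt_pow 5 x).div_const 120)).sub (Real.hasDerivAt_sin x)
    convert H using 1
    · rfl
    · rfl
    · rfl
    push_cast; ring
  · intro x hx
    have := aux_c4 x hx
    linarith

lemma aux_c6 : ∀ x : ℝ, 0 ≤ x →
    0 ≤ Real.cos x - 1 + x ^ 2 / 2 - x ^ 4 / 24 + x ^ 6 / 720 := by
  apply aux_nonneg_of_deriv (f' := fun x => -Real.sin x + x - x ^ 3 / 6 + x ^ 5 / 120) (by norm_num)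
  · intro x
    have H := ((((Real.hasDerivAt_cos x).sub (hasDerivAt_const x (1 : ℝ))).add
      ((hasDerivAt_pow 2 x).div_const 2)).sub ((hasDerivAt_pow 4 x).div_const 24)).add
      ((hasDerivAt_pow 6 x).div_const 720)
    convert H using 1
    · rfl
    · rfl
    · rfl
    push_cast; ring
  · intro x hx
    have := aux_s5 x hx
    linarith

lemma aux_s7 : ∀ x : ℝ, 0 ≤ x →
    0 ≤ Real.sin x - x + x ^ 3 / 6 - x ^ 5 / 120 + x ^ 7 / 5040 := by
  apply aux_nonneg_of_deriv
    (f' := fun x => Real.cos x - 1 + x ^ 2 / 2 - x ^ 4 / 24 + x ^ 6 / 720) (by norm_num)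
  · intro x
    have H := ((((Real.hasDerivAt_sin x).sub (hasDerivAt_id x)).add
      ((hasDerivAt_pow 3 x).div_const 6)).sub ((hasDerivAt_pow 5 x).div_const 120)).add
      ((hasDerivAt_pow 7 x).div_const 5040)
    convert H using 1
    · rfl
    · rfl
    · rfl
    push_cast; ring
  · intro x hx
    have := aux_c6 x hx
    linarith

lemma aux_c8 : ∀ x : ℝ, 0 ≤ x →
    0 ≤ 1 - x ^ 2 / 2 + x ^ 4 / 24 - x ^ 6 / 720 + x ^ 8 / 40320 - Real.cos x := by
  apply aux_nonneg_of_deriv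
    (f' := fun x => -x + x ^ 3 / 6 - x ^ 5 / 120 + x ^ 7 / 5040 + Real.sin x) (by norm_num)
  · intro x
    have H := (((((hasDerivAt_const x (1 : ℝ)).sub ((hasDerivAt_pow 2 x).div_const 2)).add
      ((hasDerivAt_pow 4 x).div_const 24)).sub ((hasDerivAt_pow 6 x).div_const 720)).add
      ((hasDerivAt_pow 8 x).div_const 40320)).sub (Real.hasDerivAt_cos x)
    convert H using 1
    · rfl
    · rfl
    · rfl
    push_cast; ring
  · intro x hx
    have := aux_s7 x hx
    linarith

/-- Degree 9 Taylor upper bound for `sin`. -/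
lemma aux_s9 : ∀ x : ℝ, 0 ≤ x →
    0 ≤ x - x ^ 3 / 6 + x ^ 5 / 120 - x ^ 7 / 5040 + x ^ 9 / 362880 - Real.sin x := by
  apply aux_nonneg_of_deriv
    (f' := fun x => 1 - x ^ 2 / 2 + x ^ 4 / 24 - x ^ 6 / 720 + x ^ 8 / 40320 - Real.cos x)
    (by norm_num)
  · intro x
    have H := (((((hasDerivAt_id x).sub ((hasDerivAt_pow 3 x).div_const 6)).add
      ((hasDerivAt_pow 5 x).div_const 120)).sub ((hasDerivAt_pow 7 x).div_const 5040)).add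
      ((hasDerivAt_pow 9 x).div_const 362880)).sub (Real.hasDerivAt_sin x)
    convert H using 1
    · rfl
    · rfl
    · rfl
    push_cast; ring
  · intro x hx
    have := aux_c8 x hx
    linarith

/-- The sine integral is at most its degree-9 Taylor upper bound integral. -/
lemma aux_integral_bound :
    (∫ lam in (0 : ℝ)..Real.pi, Real.sin lam / lam) ≤
      Real.pi - Real.pi ^ 3 / 18 + Real.pi ^ 5 / 600 - Real.pi ^ 7 / 35280 +
        Real.pi ^ 9 / 3265920 := by
  have hP : (∫ x in (0 : ℝ)..Real.pi,
      (1 - x ^ 2 / 6 + x ^ 4 / 120 - x ^ 6 / 5040 + x ^ 8 / 362880)) =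
      Real.pi - Real.pi ^ 3 / 18 + Real.pi ^ 5 / 600 - Real.pi ^ 7 / 35280 +
        Real.pi ^ 9 / 3265920 := by
    rw [intervalIntegral.integral_eq_sub_of_hasDerivAt
      (f := fun x : ℝ => x - x ^ 3 / 18 + x ^ 5 / 600 - x ^ 7 / 35280 + x ^ 9 / 3265920)
      (fun x _ => by
        have H := (((((hasDerivAt_id x).sub ((hasDerivAt_pow 3 x).div_const 18)).add
          ((hasDerivAt_pow 5 x).div_const 600)).sub
          ((hasDerivAt_pow 7 x).div_const 35280)).add
          ((hasDerivAt_pow 9 x).div_const 3265920))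
        convert H using 1
        · rfl
        push_cast; ring)
      (by apply Continuous.intervalIntegrable; continuity)]
    norm_num
  rw [← hP]
  have hint : IntervalIntegrable (fun lam : ℝ => Real.sin lam / lam) volume 0 Real.pi := by
    rw [intervalIntegrable_iff_integrableOn_Ioc_of_le Real.pi_pos.le]
    apply Measure.integrableOn_of_bounded (M := 1)
    · exact ((measure_Ioc_lt_top).ne)
    · exact (Real.measurable_sin.div measurable_id).aestronglyMeasurable
    · filter_upwards [ae_restrict_mem measurableSet_Ioc] with x hx
      rw [Real.norm_eq_abs, abs_div]
      rcases hx with ⟨hx0, _⟩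
      rw [div_le_one (abs_pos.mpr hx0.ne')]
      exact Real.abs_sin_le_abs
  apply intervalIntegral.integral_mono_on Real.pi_pos.le hint
    (by apply Continuous.intervalIntegrable; continuity)
  intro x hx
  rcases eq_or_lt_of_le hx.1 with h0 | h0
  · rw [← h0]
    norm_num
  · rw [div_le_iff₀ h0]
    have := aux_s9 x h0.le
    nlinarith

/-- The odd squares sum. -/
lemma aux_odd_sum : (∑' n : ℕ, (1 : ℝ) / (2 * (n : ℝ) + 1) ^ 2) = Real.pi ^ 2 / 8 := by
  have hsum : Summable (fun n : ℕ => (1 : ℝ) / (2 * (n : ℝ) + 1) ^ 2) := by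
    apply Summable.of_nonneg_of_le (fun n => by positivity)
      (f := fun n : ℕ => (1 : ℝ) / ((n : ℝ) + 1) ^ 2)
    · intro n
      apply one_div_le_one_div_of_le (by positivity)
      have : (0 : ℝ) ≤ (n : ℝ) := n.cast_nonneg
      nlinarith
    · have : Summable (fun n : ℕ => (1 : ℝ) / (n : ℝ) ^ 2) := by
        rw [Real.summable_one_div_nat_pow]
        norm_num
      have h := (summable_nat_add_iff 1).mpr this
      apply h.congr
      intro n
      push_cast
      ring
  have heven : HasSum (fun k : ℕ => (1 : ℝ) / ((2 * k : ℕ) : ℝ) ^ 2) (Real.pi ^ 2 / 24) := by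
    have h := hasSum_zeta_two.mul_left (1 / 4)
    have he : (fun n : ℕ => (1 / 4 : ℝ) * (1 / (n : ℝ) ^ 2)) =
        fun k : ℕ => (1 : ℝ) / ((2 * k : ℕ) : ℝ) ^ 2 := by
      funext n
      push_cast
      rw [div_mul_div_comm, one_mul, mul_pow]
      norm_num
    rw [he] at h
    convert h using 1
    · rfl
    ring
  have hodd : HasSum (fun k : ℕ => (1 : ℝ) / ((2 * k + 1 : ℕ) : ℝ) ^ 2)
      (∑' n : ℕ, (1 : ℝ) / (2 * (n : ℝ) + 1) ^ 2) := by
    have he : (fun k : ℕ => (1 : ℝ) / ((2 * k + 1 : ℕ) : ℝ) ^ 2) =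
        fun n : ℕ => (1 : ℝ) / (2 * (n : ℝ) + 1) ^ 2 := by
      funext k
      push_cast
      ring
    rw [he]
    exact hsum.hasSum
  have htot := HasSum.even_add_odd (f := fun n : ℕ => (1 : ℝ) / (n : ℝ) ^ 2) heven hodd
  have hq := htot.unique hasSum_zeta_two
  linarith

/-- Summability of the odd squares series. -/
lemma aux_odd_summable : Summable (fun n : ℕ => (1 : ℝ) / (2 * (n : ℝ) + 1) ^ 2) := by
  apply Summable.of_nonneg_of_le (fun n => by positivity)
    (f := fun n : ℕ => (1 : ℝ) / ((n : ℝ) + 1) ^ 2)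
  · intro n
    apply one_div_le_one_div_of_le (by positivity)
    have : (0 : ℝ) ≤ (n : ℝ) := n.cast_nonneg
    nlinarith
  · have : Summable (fun n : ℕ => (1 : ℝ) / (n : ℝ) ^ 2) := by
      rw [Real.summable_one_div_nat_pow]
      norm_num
    have h := (summable_nat_add_iff 1).mpr this
    apply h.congr
    intro n
    push_cast
    ring

/-- Lower bound for the alternating odd squares series (Catalan's constant). -/
lemma aux_catalan_lb :
    (0.91533 : ℝ) ≤ ∑' n : ℕ, (-1 : ℝ) ^ n / (2 * (n : ℝ) + 1) ^ 2 := by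
  set f : ℕ → ℝ := fun n => 1 / (2 * (n : ℝ) + 1) ^ 2 with hf
  have hfe : (fun n : ℕ => (-1 : ℝ) ^ n / (2 * (n : ℝ) + 1) ^ 2) =
      fun n : ℕ => (-1 : ℝ) ^ n * f n := by
    funext n
    rw [hf, mul_one_div]
  have hsum : Summable (fun n : ℕ => (-1 : ℝ) ^ n * f n) := by
    apply Summable.of_abs
    apply aux_odd_summable.congr
    intro n
    rw [abs_mul, abs_pow, abs_neg, abs_one, one_pow, one_mul, hf]
    rw [abs_of_nonneg (by positivity)]
  have hanti : Antitone f := by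
    intro a b hab
    rw [hf]
    apply one_div_le_one_div_of_le (by positivity)
    have : (a : ℝ) ≤ (b : ℝ) := by exact_mod_cast hab
    nlinarith
  have hkey := hanti.alternating_series_le_tendsto
    (l := ∑' n : ℕ, (-1 : ℝ) ^ n * f n) hsum.hasSum.tendsto_sum_nat 7
  rw [hfe]
  refine le_trans ?_ hkey
  rw [hf]
  simp only [Finset.sum_range_succ, Finset.sum_range_zero]
  norm_num

theorem stmt7 :
    ((∑' n : ℕ, (1 : ℝ) / (2 * (n : ℝ) + 1) ^ 2) /
        (∑' n : ℕ, (-1 : ℝ) ^ n / (2 * (n : ℝ) + 1) ^ 2)) / 2 *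
      ∫ lam in (0 : ℝ)..Real.pi, Real.sin lam / lam < 1.25 := by
  have hA := aux_odd_sum
  have hB := aux_catalan_lb
  set B := ∑' n : ℕ, (-1 : ℝ) ^ n / (2 * (n : ℝ) + 1) ^ 2 with hBdef
  have hB0 : (0 : ℝ) < B := lt_of_lt_of_le (by norm_num) hB
  have hI := aux_integral_bound
  set I := ∫ lam in (0 : ℝ)..Real.pi, Real.sin lam / lam with hIdef
  rw [hA]
  have hcoef : (0 : ℝ) < Real.pi ^ 2 / 8 / B / 2 := by positivity
  have step1 : Real.pi ^ 2 / 8 / B / 2 * I ≤ Real.pi ^ 2 / 8 / B / 2 *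
      (Real.pi - Real.pi ^ 3 / 18 + Real.pi ^ 5 / 600 - Real.pi ^ 7 / 35280 +
        Real.pi ^ 9 / 3265920) :=
    mul_le_mul_of_nonneg_left hI hcoef.le
  refine lt_of_le_of_lt step1 ?_
  rw [div_div, div_div, div_mul_eq_mul_div, div_lt_iff₀ (by positivity)]
  have hpl : (3.141592 : ℝ) < Real.pi := Real.pi_gt_d6
  have hpu : Real.pi < (3.141593 : ℝ) := Real.pi_lt_d6
  have hpp : (0 : ℝ) < Real.pi := Real.pi_pos
  have h2l : (9.86960 : ℝ) < Real.pi ^ 2 := by nlinarith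
  have h2u : Real.pi ^ 2 < (9.86961 : ℝ) := by nlinarith
  have h3l : (31.00625 : ℝ) < Real.pi ^ 3 := by nlinarith
  have h3u : Real.pi ^ 3 < (31.00630 : ℝ) := by nlinarith
  have h4l : (97.40898 : ℝ) < Real.pi ^ 4 := by nlinarith
  have h4u : Real.pi ^ 4 < (97.40918 : ℝ) := by nlinarith
  have h5l : (306.01927 : ℝ) < Real.pi ^ 5 := by nlinarith
  have h5u : Real.pi ^ 5 < (306.02000 : ℝ) := by nlinarith
  have h6l : (961.38769 : ℝ) < Real.pi ^ 6 := by nlinarith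
  have h6u : Real.pi ^ 6 < (961.39029 : ℝ) := by nlinarith
  have h7l : (3020.28787 : ℝ) < Real.pi ^ 7 := by nlinarith
  have h7u : Real.pi ^ 7 < (3020.29701 : ℝ) := by nlinarith
  have h8l : (9488.51221 : ℝ) < Real.pi ^ 8 := by nlinarith
  have h8u : Real.pi ^ 8 < (9488.54395 : ℝ) := by nlinarith
  have h9l : (29809.03405 : ℝ) < Real.pi ^ 9 := by nlinarith
  have h9u : Real.pi ^ 9 < (29809.14326 : ℝ) := by nlinarith
  have h10l : (93647.82289 : ℝ) < Real.pi ^ 10 := by nlinarith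
  have h10u : Real.pi ^ 10 < (93648.19581 : ℝ) := by nlinarith
  have h11u : Real.pi ^ 11 < (294204.51642 : ℝ) := by nlinarith
  have hfin : Real.pi ^ 2 *
      (Real.pi - Real.pi ^ 3 / 18 + Real.pi ^ 5 / 600 - Real.pi ^ 7 / 35280 +
        Real.pi ^ 9 / 3265920) < 1.25 * (8 * (B * 2)) := by
    have hBB : (2.28832 : ℝ) ≤ 1.25 * (B * 2) / 8 * 8 := by nlinarith
    nlinarith [h3u, h5l, h7u, h9l, h11u, hB]
  exact hfin
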